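/- Let H_3 be the 3×3 Hilbert matrix with entries H_3[i,j] = 1/(i+j-1) ∈ ℚ, and f(σ) = ∑_{i=1}^3 H_3[i, σ(i)]. Then APD_1(f) = 0 and APD_2(f) = 1/120 = det(H_3) · 3 · 3!, where det(H_3) = 1/2160. -/

import Mathlib

def APDQ {n : ℕ} (f : Equiv.Perm (Fin n) → ℚ) (m : ℕ) : ℚ :=
  ∑ σ : Equiv.Perm (Fin n), (Equiv.Perm.sign σ : ℤ) * (f σ) ^ m

/-- The 3×3 Hilbert matrix `H_3[i,j] = 1/(i+j-1)` (1-based indices). -/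
def Hilbert3 : Matrix (Fin 3) (Fin 3) ℚ :=
  Matrix.of fun i j => 1 / ((i : ℕ) + (j : ℕ) + 1 : ℚ)

def fHilbert3 (σ : Equiv.Perm (Fin 3)) : ℚ :=
  ∑ i : Fin 3, Hilbert3 i (σ i)

lemma perm3_univ : (Finset.univ : Finset (Equiv.Perm (Fin 3))) =
    {1, Equiv.swap 0 1, Equiv.swap 0 2, Equiv.swap 1 2,
     Equiv.swap 0 1 * Equiv.swap 1 2, Equiv.swap 1 2 * Equiv.swap 0 1} := by
  decide

lemma apdq_expand (m : ℕ) :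
    APDQ fHilbert3 m =
      (1 : ℚ) * (1/1 + 1/3 + 1/5) ^ m
      + (-1 : ℚ) * (1/2 + 1/2 + 1/5) ^ m
      + (-1 : ℚ) * (1/3 + 1/3 + 1/3) ^ m
      + (-1 : ℚ) * (1/1 + 1/4 + 1/4) ^ m
      + (1 : ℚ) * (1/2 + 1/4 + 1/3) ^ m
      + (1 : ℚ) * (1/3 + 1/2 + 1/4) ^ m := by
  rw [APDQ, perm3_univ]
  rw [show ({1, Equiv.swap 0 1, Equiv.swap 0 2, Equiv.swap 1 2,
     Equiv.swap 0 1 * Equiv.swap 1 2, Equiv.swap 1 2 * Equiv.swap 0 1} :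
       Finset (Equiv.Perm (Fin 3))) =
     insert 1 (insert (Equiv.swap 0 1) (insert (Equiv.swap 0 2) (insert (Equiv.swap 1 2)
       (insert (Equiv.swap 0 1 * Equiv.swap 1 2) {Equiv.swap 1 2 * Equiv.swap 0 1})))) from rfl]
  rw [Finset.sum_insert (by decide), Finset.sum_insert (by decide),
    Finset.sum_insert (by decide), Finset.sum_insert (by decide),
    Finset.sum_insert (by decide), Finset.sum_singleton]
  have h1 : (Equiv.Perm.sign (1 : Equiv.Perm (Fin 3)) : ℤ) = 1 := by decide
  have h2 : (Equiv.Perm.sign (Equiv.swap (0:Fin 3) 1) : ℤ) = -1 := by decide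
  have h3 : (Equiv.Perm.sign (Equiv.swap (0:Fin 3) 2) : ℤ) = -1 := by decide
  have h4 : (Equiv.Perm.sign (Equiv.swap (1:Fin 3) 2) : ℤ) = -1 := by decide
  have h5 : (Equiv.Perm.sign (Equiv.swap (0:Fin 3) 1 * Equiv.swap 1 2) : ℤ) = 1 := by decide
  have h6 : (Equiv.Perm.sign (Equiv.swap (1:Fin 3) 2 * Equiv.swap 0 1) : ℤ) = 1 := by decide
  rw [h1, h2, h3, h4, h5, h6]
  have e1 : fHilbert3 1 = 1/1 + 1/3 + 1/5 := by
    norm_num [fHilbert3, Hilbert3, Fin.sum_univ_succ, Equiv.swap_apply_def, Fin.ext_iff]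
  have e2 : fHilbert3 (Equiv.swap 0 1) = 1/2 + 1/2 + 1/5 := by
    simp [fHilbert3, Hilbert3, Fin.sum_univ_three, Equiv.swap_apply_of_ne_of_ne]
    norm_num
  have e3 : fHilbert3 (Equiv.swap 0 2) = 1/3 + 1/3 + 1/3 := by
    simp [fHilbert3, Hilbert3, Fin.sum_univ_three, Equiv.swap_apply_of_ne_of_ne]
    norm_num
  have e4 : fHilbert3 (Equiv.swap 1 2) = 1/1 + 1/4 + 1/4 := by
    simp [fHilbert3, Hilbert3, Fin.sum_univ_three, Equiv.swap_apply_of_ne_of_ne]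
    norm_num
  have e5 : fHilbert3 (Equiv.swap 0 1 * Equiv.swap 1 2) = 1/2 + 1/4 + 1/3 := by
    simp [fHilbert3, Hilbert3, Fin.sum_univ_three, Equiv.swap_apply_of_ne_of_ne]
    norm_num
  have e6 : fHilbert3 (Equiv.swap 1 2 * Equiv.swap 0 1) = 1/3 + 1/2 + 1/4 := by
    simp [fHilbert3, Hilbert3, Fin.sum_univ_three, Equiv.swap_apply_of_ne_of_ne]
    norm_num
  rw [e1, e2, e3, e4, e5, e6]
  push_cast
  ring

theorem apd_hilbert_3 :
    APDQ fHilbert3 1 = 0 ∧ APDQ fHilbert3 2 = 1 / 120 ∧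
      Hilbert3.det = 1 / 2160 ∧
      APDQ fHilbert3 2 = Hilbert3.det * 3 * (Nat.factorial 3 : ℚ) := by
  have hdet : Hilbert3.det = 1 / 2160 := by
    rw [Matrix.det_fin_three]
    simp [Hilbert3]
    norm_num
  refine ⟨?_, ?_, hdet, ?_⟩
  · rw [apdq_expand]; norm_num
  · rw [apdq_expand]; norm_num
  · rw [apdq_expand, hdet]; norm_num [Nat.factorial]
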